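/- In the semigroup F generated by the automaton I, the relations r_n = r'_n hold for all n ≥ 1, where r₁ = s², r'₁ = e, r_n = f_{n+1}f_n², and r'_n = f_{n%2+1}(f_{n%2+5}f_{n%2+7}⋯f_{n-1}f_{n+1})f_n. -/

import Mathlib

/-- The transformation of `{0,1}*` given by the state `s` of the automaton `I`:
it flips the first letter (`φ(s) = ⟨e,e⟩σ`).  Letters: `false = 0`, `true = 1`. -/
def sAct : List Bool → List Bool
  | [] => []
  | a :: w => (!a) :: w

/-- The transformation of `{0,1}*` given by the state `f` of the automaton `I`
(`φ(f) = ⟨s,f⟩ζ`): `0w ↦ 0·w^s` and `1w ↦ 0·w^f`. -/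
def fAct : List Bool → List Bool
  | [] => []
  | false :: w => false :: sAct w
  | true :: w => false :: fAct w

/-- The elements `f_n` of the semigroup: `f₁ = s`, `f₂ = f`,
`f_n = f_{n-2} f_{n-1}` (products written left-to-right). -/
def fA : ℕ → List Bool → List Bool
  | 0 => id
  | 1 => sAct
  | 2 => fAct
  | (n + 3) => fun w => fA (n + 2) (fA (n + 1) w)

/-- The left-to-right product `f_{i₁} f_{i₂} ⋯ f_{i_k}` of the elements `f_i`
along a list of indices. -/
def prodL (l : List ℕ) (w : List Bool) : List Bool :=
  l.foldl (fun v i => fA i v) w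

lemma s2 : ∀ w, sAct (sAct w) = w := by
  intro w; cases w <;> simp [sAct]

lemma f3 : ∀ w, fAct (fAct (fAct w)) = fAct w := by
  have ff0 : ∀ u, fAct (fAct (false :: u)) = false :: u := by
    intro u; simp [fAct, s2]
  intro w
  match w with
  | [] => rfl
  | true :: v => rw [show fAct (true :: v) = false :: fAct v from rfl, ff0]
  | false :: v => rw [show fAct (false :: v) = false :: sAct v from rfl, ff0]

lemma fA_nil : ∀ m, fA m [] = [] := by
  intro m
  induction m using Nat.strong_induction_on with
  | _ m ih =>
    match m with
    | 0 => rfl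
    | 1 => rfl
    | 2 => rfl
    | (n+3) =>
      show fA (n+2) (fA (n+1) []) = []
      rw [ih (n+1) (by omega), ih (n+2) (by omega)]

def bA : ℕ → List Bool → List Bool
  | 0 => id
  | 1 => id
  | 2 => fAct
  | 3 => sAct
  | (m+4) => fun w => fA (m+2) (bA (m+2) w)

lemma sec : ∀ m (x : Bool) (w : List Bool),
    fA (m+2) (x :: w) = false :: (if x then bA (m+2) w else fA (m+1) w) := by
  intro m
  induction m using Nat.strong_induction_on with
  | _ m ih =>
    match m with
    | 0 => intro x w; cases x <;> simp [fA, bA, fAct]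
    | 1 => intro x w; cases x <;> simp [fA, bA, fAct, sAct]
    | (m+2) =>
      intro x w
      calc fA (m+4) (x::w) = fA (m+3) (fA (m+2) (x::w)) := rfl
        _ = fA (m+3) (false :: (if x then bA (m+2) w else fA (m+1) w)) := by
              rw [ih m (by omega) x w]
        _ = false :: (if false then bA (m+3) (if x then bA (m+2) w else fA (m+1) w)
              else fA (m+2) (if x then bA (m+2) w else fA (m+1) w)) :=
              ih (m+1) (by omega) false _
        _ = false :: (if x then bA (m+4) w else fA (m+3) w) := by
              cases x <;> simp [bA, fA]

lemma prodL_cons (a : ℕ) (l : List ℕ) (w : List Bool) :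
    prodL (a :: l) w = prodL l (fA a w) := rfl

lemma prodL_append (l₁ l₂ : List ℕ) (w : List Bool) :
    prodL (l₁ ++ l₂) w = prodL l₂ (prodL l₁ w) := by
  simp [prodL, List.foldl_append]

lemma prodL_nil_word : ∀ l : List ℕ, prodL l [] = [] := by
  intro l
  induction l with
  | nil => rfl
  | cons a l ih => rw [prodL_cons, fA_nil]; exact ih

lemma prodL_sec : ∀ l : List ℕ, (∀ i ∈ l, 2 ≤ i) → ∀ v,
    prodL l (false :: v) = false :: prodL (l.map (· - 1)) v := by
  intro l
  induction l with
  | nil => intro _ v; rfl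
  | cons a l ih =>
    intro h v
    obtain ⟨m, rfl⟩ : ∃ m, a = m + 2 := ⟨a - 2, by have := h (a) (by simp); omega⟩
    rw [prodL_cons, sec m false v]
    simp only [if_neg Bool.false_ne_true]
    rw [ih (fun i hi => h i (by simp [hi])) (fA (m+1) v)]
    congr 1

def gs (r k : ℕ) : List ℕ := (List.range k).map (fun j => r + 2 * j)

lemma gs_cons (r k : ℕ) : gs r (k+1) = r :: gs (r+2) k := by
  simp only [gs, List.range_succ_eq_map, List.map_cons, List.map_map, Nat.mul_zero,
    Nat.add_zero]
  congr 1
  exact List.map_congr_left (fun j _ => by simp only [Function.comp]; omega)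

lemma gs_snoc (r k : ℕ) : gs r (k+1) = gs r k ++ [r + 2*k] := by
  simp [gs, List.range_succ]

lemma gs_mem (r k : ℕ) : ∀ i ∈ gs r k, r ≤ i := by
  intro i hi
  simp only [gs, List.mem_map, List.mem_range] at hi
  obtain ⟨j, _, rfl⟩ := hi; omega

lemma gs_shift (r k : ℕ) : (gs (r+1) k).map (· - 1) = gs r k := by
  simp only [gs, List.map_map]
  exact List.map_congr_left (fun j _ => by simp only [Function.comp]; omega)

lemma bA5 (w : List Bool) : bA 5 w = fA 2 w := by
  show fA 3 (sAct w) = fA 2 w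
  show fA 2 (fA 1 (sAct w)) = fA 2 w
  show fA 2 (sAct (sAct w)) = fA 2 w
  rw [s2]

lemma Godd : ∀ k (w : List Bool),
    fA (2*k+2) (bA (2*k+4) w) = prodL (2 :: gs 5 k) w := by
  intro k
  induction k with
  | zero =>
    intro w
    show fA 2 (fA 2 (fA 2 w)) = prodL [2] w
    exact f3 w
  | succ k ih =>
    intro w
    have e1 : bA (2*k+6) w = fA (2*k+4) (bA (2*k+4) w) := rfl
    have e2 : (2 : ℕ) :: gs 5 (k+1) = (2 :: gs 5 k) ++ [5+2*k] := by
      rw [gs_snoc]; rfl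
    calc fA (2*(k+1)+2) (bA (2*(k+1)+4) w)
        = fA (2*k+4) (fA (2*k+4) (bA (2*k+4) w)) := rfl
      _ = fA (2*k+4) (fA (2*k+3) (fA (2*k+2) (bA (2*k+4) w))) := rfl
      _ = fA (2*k+5) (fA (2*k+2) (bA (2*k+4) w)) := rfl
      _ = fA (2*k+5) (prodL (2 :: gs 5 k) w) := by rw [ih]
      _ = prodL (2 :: gs 5 (k+1)) w := by
            rw [e2, prodL_append]
            show fA (2*k+5) _ = fA (5+2*k) _
            congr 1
            omega

lemma Geven : ∀ k (w : List Bool),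
    fA (2*k+3) (bA (2*k+5) w) = prodL (gs 4 (k+1)) w := by
  intro k
  induction k with
  | zero =>
    intro w
    show fA 3 (bA 5 w) = prodL [4] w
    rw [bA5]
    rfl
  | succ k ih =>
    intro w
    calc fA (2*(k+1)+3) (bA (2*(k+1)+5) w)
        = fA (2*k+5) (fA (2*k+5) (bA (2*k+5) w)) := rfl
      _ = fA (2*k+5) (fA (2*k+4) (fA (2*k+3) (bA (2*k+5) w))) := rfl
      _ = fA (2*k+6) (fA (2*k+3) (bA (2*k+5) w)) := rfl
      _ = fA (2*k+6) (prodL (gs 4 (k+1)) w) := by rw [ih]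
      _ = prodL (gs 4 (k+2)) w := by
            rw [gs_snoc 4 (k+1), prodL_append]
            show fA (2*k+6) _ = fA (4+2*(k+1)) _
            congr 1
            omega

lemma prodL_nil (w : List Bool) : prodL [] w = w := rfl

lemma gs_shift7 (k : ℕ) : (gs 7 k).map (· - 1) = gs 6 k := by
  simp only [gs, List.map_map]
  exact List.map_congr_left (fun j _ => by simp only [Function.comp]; omega)

lemma gs_shift6 (k : ℕ) : (gs 6 k).map (· - 1) = gs 5 k := by
  simp only [gs, List.map_map]
  exact List.map_congr_left (fun j _ => by simp only [Function.comp]; omega)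

lemma gs_cons5 (k : ℕ) : gs 5 (k+1) = 5 :: gs 7 k := by
  simp only [gs, List.range_succ_eq_map, List.map_cons, List.map_map, Nat.mul_zero,
    Nat.add_zero]
  congr 1
  exact List.map_congr_left (fun j _ => by simp only [Function.comp]; omega)

lemma gs_cons4 (k : ℕ) : gs 4 (k+1) = 4 :: gs 6 k := by
  simp only [gs, List.range_succ_eq_map, List.map_cons, List.map_map, Nat.mul_zero,
    Nat.add_zero]
  congr 1
  exact List.map_congr_left (fun j _ => by simp only [Function.comp]; omega)

lemma fAct_shape (w : List Bool) : fAct w = [] ∨ ∃ v, fAct w = false :: v := by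
  match w with
  | [] => exact Or.inl rfl
  | true :: v => exact Or.inr ⟨fAct v, rfl⟩
  | false :: v => exact Or.inr ⟨sAct v, rfl⟩

lemma R2 (w : List Bool) : prodL [3,2,2] w = prodL [1,2] w := by
  show fA 2 (fA 2 (fA 2 (fA 1 w))) = fA 2 (fA 1 w)
  exact f3 (sAct w)

lemma R3 (w : List Bool) : prodL [4,3,3] w = prodL [2,3] w := by
  show fA 3 (fA 3 (fA 3 (fA 2 w))) = fA 3 (fA 2 w)
  rcases fAct_shape w with h | ⟨v, h⟩
  · show fA 3 (fA 3 (fA 3 (fAct w))) = fA 3 (fAct w)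
    simp only [h, fA_nil]
  · show fA 3 (fA 3 (fA 3 (fAct w))) = fA 3 (fAct w)
    rw [h]
    have g1 : ∀ u, fA 3 (false :: u) = false :: fAct u := fun u => rfl
    rw [g1, g1, g1, f3]

lemma main : ∀ k : ℕ,
    (∀ w, prodL [2*k+3, 2*k+2, 2*k+2] w = prodL (1 :: (gs 5 k ++ [2*k+2])) w) ∧
    (∀ w, prodL [2*k+4, 2*k+3, 2*k+3] w = prodL (2 :: (gs 6 k ++ [2*k+3])) w) := by
  intro k
  induction k with
  | zero =>
    constructor
    · intro w; norm_num [gs]; exact R2 w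
    · intro w; norm_num [gs]; exact R3 w
  | succ k ih =>
    obtain ⟨ihE, ihO⟩ := ih
    have n2 : 2*(k+1)+2 = 2*k+4 := by omega
    have n3 : 2*(k+1)+3 = 2*k+5 := by omega
    have n4 : 2*(k+1)+4 = 2*k+6 := by omega
    have hF4 : ∀ u, fA (2*k+4) (false :: u) = false :: fA (2*k+3) u := by
      intro u; simpa using sec (2*k+2) false u
    have hF5 : ∀ u, fA (2*k+5) (false :: u) = false :: fA (2*k+4) u := by
      intro u; simpa using sec (2*k+3) false u
    have hmemE : ∀ i ∈ (gs 7 k ++ [2*k+4]), 2 ≤ i := by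
      intro i hi
      rcases List.mem_append.1 hi with h | h
      · have := gs_mem 7 k i h; omega
      · simp at h; omega
    have hmapE : (gs 7 k ++ [2*k+4]).map (· - 1) = gs 6 k ++ [2*k+3] := by
      rw [List.map_append, gs_shift7]
      simp only [List.map_cons, List.map_nil]
      congr 2
    have hmemO : ∀ i ∈ (gs 6 (k+1) ++ [2*k+5]), 2 ≤ i := by
      intro i hi
      rcases List.mem_append.1 hi with h | h
      · have := gs_mem 6 (k+1) i h; omega
      · simp at h; omega
    have hmapO : (gs 6 (k+1) ++ [2*k+5]).map (· - 1) = gs 5 (k+1) ++ [2*k+4] := by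
      rw [List.map_append, gs_shift6]
      simp only [List.map_cons, List.map_nil]
      congr 2
    have hE : ∀ w, prodL [2*k+5, 2*k+4, 2*k+4] w
        = prodL (1 :: (gs 5 (k+1) ++ [2*k+4])) w := by
      intro w
      match w with
      | [] => rw [prodL_nil_word, prodL_nil_word]
      | x :: v =>
        simp only [prodL_cons, prodL_nil]
        cases x
        · -- x = false
          have hL1 : fA (2*k+5) (false :: v) = false :: fA (2*k+4) v := hF5 v
          have hx : fA 1 ((false : Bool) :: v) = true :: v := rfl
          have hR5 : fA 5 (true :: v) = false :: bA 5 v := by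
            simpa using sec 3 true v
          rw [hL1, hF4, hF4, hx, gs_cons5, List.cons_append, prodL_cons, hR5,
            prodL_sec _ hmemE, hmapE, bA5]
          have h := ihO v
          simp only [prodL_cons, prodL_nil] at h
          exact congrArg (false :: ·) h
        · -- x = true
          have hL1 : fA (2*k+5) (true :: v) = false :: bA (2*k+5) v := by
            simpa using sec (2*k+3) true v
          have hx : fA 1 ((true : Bool) :: v) = false :: v := rfl
          have hR5 : fA 5 ((false : Bool) :: v) = false :: fA 4 v := by
            simpa using sec 3 false v
          rw [hL1, hF4, hF4, hx, gs_cons5, List.cons_append, prodL_cons, hR5,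
            prodL_sec _ hmemE, hmapE]
          rw [Geven k v, ← prodL_cons 4 (gs 6 k ++ [2*k+3]) v, ← List.cons_append,
            ← gs_cons4, prodL_append]
          simp only [prodL_cons, prodL_nil]
    have hO : ∀ w, prodL [2*k+6, 2*k+5, 2*k+5] w
        = prodL (2 :: (gs 6 (k+1) ++ [2*k+5])) w := by
      intro w
      match w with
      | [] => rw [prodL_nil_word, prodL_nil_word]
      | x :: v =>
        simp only [prodL_cons, prodL_nil]
        cases x
        · -- x = false
          have hL1 : fA (2*k+6) (false :: v) = false :: fA (2*k+5) v := by
            simpa using sec (2*k+4) false v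
          have h2 : fA 2 ((false : Bool) :: v) = false :: fA 1 v := by
            simpa using sec 0 false v
          rw [hL1, hF5, hF5, h2, prodL_sec _ hmemO, hmapO]
          have h := hE v
          simp only [prodL_cons, prodL_nil] at h
          exact congrArg (false :: ·) h
        · -- x = true
          have hL1 : fA (2*k+6) (true :: v) = false :: bA (2*k+6) v := by
            simpa using sec (2*k+4) true v
          have h2 : fA 2 ((true : Bool) :: v) = false :: fA 2 v := by
            simpa [bA, fA] using sec 0 true v
          rw [hL1, hF5, hF5, h2, prodL_sec _ hmemO, hmapO]
          have hg := Godd (k+1) v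
          rw [show 2*(k+1)+2 = 2*k+4 by omega, show 2*(k+1)+4 = 2*k+6 by omega] at hg
          rw [hg, ← prodL_cons 2 (gs 5 (k+1) ++ [2*k+4]) v, ← List.cons_append,
            prodL_append]
          simp only [prodL_cons, prodL_nil]
    constructor
    · intro w; rw [n3, n2]; exact hE w
    · intro w; rw [n4, n3]; exact hO w

/-- Membership in the semigroup `F` generated by `s` and `f`: `g` is a nonempty
product of the generators (`false` stands for the generator `s`, `true` for `f`;
products are written left-to-right). -/
def inF (g : List Bool → List Bool) : Prop :=
  ∃ u : List Bool, u ≠ [] ∧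
    (fun w => u.foldl (fun v a => if a then fAct v else sAct v) w) = g

/-- The relations `r_n = r'_n` hold in `F` for all `n ≥ 1`:
`r₁ = s²` equals `r'₁ = e`, and for `n ≥ 2`,
`r_n = f_{n+1} f_n²` equals
`r'_n = f_{n%2+1} (f_{n%2+5} f_{n%2+7} ⋯ f_{n-1} f_{n+1}) f_n`
(the middle product runs over indices `n%2+5, n%2+7, …, n+1` and is empty
when `n%2+5 > n+1`). -/
theorem relations_rn :
    (∀ w : List Bool, sAct (sAct w) = w) ∧
    (∀ n : ℕ, 2 ≤ n → ∀ w : List Bool,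
      prodL [n + 1, n, n] w =
      prodL ((n % 2 + 1) ::
        ((List.range ((n + 3 - (n % 2 + 5)) / 2)).map (fun j => n % 2 + 5 + 2 * j)
          ++ [n])) w) := by
  refine ⟨s2, ?_⟩
  intro n hn w
  rcases Nat.even_or_odd n with ⟨m, hm⟩ | ⟨m, hm⟩
  · obtain ⟨k, rfl⟩ : ∃ k, n = 2*k+2 := ⟨m - 1, by omega⟩
    have h1 : (2*k+2) % 2 = 0 := by omega
    rw [h1]
    have h2 : (2*k+2+3 - (0+5))/2 = k := by omega
    rw [h2]
    simp only [Nat.zero_add]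
    have h3 : 2*k+2+1 = 2*k+3 := by omega
    rw [h3]
    exact (main k).1 w
  · obtain ⟨k, rfl⟩ : ∃ k, n = 2*k+3 := ⟨m - 1, by omega⟩
    have h1 : (2*k+3) % 2 = 1 := by omega
    rw [h1]
    have h2 : (2*k+3+3 - (1+5))/2 = k := by omega
    rw [h2]
    simp only [show (1:ℕ)+5 = 6 from rfl, show (1:ℕ)+1 = 2 from rfl]
    have h3 : 2*k+3+1 = 2*k+4 := by omega
    rw [h3]
    exact (main k).2 w
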